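/- Let ρ > 0, let A, B ∈ ℂ, and let w be a holomorphic function on the open disc D(0,ρ) ⊆ ℂ. Then there exist 0 < ρ′ ≤ ρ and a holomorphic function k on D(0,ρ′) with k(0) = 1 such that z·k″(z) + 3·k′(z) = (A + B·z + z²·w(z))·k(z) for all z ∈ D(0,ρ′). -/

import Mathlib

open Metric

noncomputable def frobCoeff (c : ℕ → ℂ) : ℕ → ℂ
  | 0 => 1
  | n + 1 =>
      (∑ j ∈ Finset.range (n + 1), c j * frobCoeff c (n - j)) /
        (((n : ℂ) + 1) * ((n : ℂ) + 3))
  decreasing_by exact Nat.lt_succ_of_le (Nat.sub_le n j)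

lemma frobCoeff_zero (c : ℕ → ℂ) : frobCoeff c 0 = 1 := by simp [frobCoeff]

lemma frobCoeff_rec (c : ℕ → ℂ) (n : ℕ) :
    ((n : ℂ) + 1) * ((n : ℂ) + 3) * frobCoeff c (n + 1)
      = ∑ j ∈ Finset.range (n + 1), c j * frobCoeff c (n - j) := by
  have h1 : ((n : ℂ) + 1) ≠ 0 := Nat.cast_add_one_ne_zero n
  have h3 : ((n : ℂ) + 3) ≠ 0 := by
    intro h
    have : ((n : ℝ) + 3) = 0 := by exact_mod_cast congrArg Complex.re h
    nlinarith [Nat.cast_nonneg (α := ℝ) n]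
  rw [frobCoeff]
  field_simp

lemma summable_quadratic_geom (C2 C1 C0 : ℝ) :
    Summable (fun n : ℕ => (C2 * (n : ℝ) ^ 2 + C1 * (n : ℝ) + C0) * (1/2 : ℝ) ^ n) := by
  have hx : ‖(1/2 : ℝ)‖ < 1 := by
    rw [Real.norm_eq_abs, abs_of_nonneg (by norm_num : (0:ℝ) ≤ 1/2)]; norm_num
  have h2 := (summable_pow_mul_geometric_of_norm_lt_one 2 hx).mul_left C2
  have h1 := (summable_pow_mul_geometric_of_norm_lt_one 1 hx).mul_left C1
  have h0 := (summable_pow_mul_geometric_of_norm_lt_one 0 hx).mul_left C0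
  exact ((h2.add h1).add h0).congr (fun n => by ring)

lemma complex_norm_natCast_add_one (n : ℕ) : ‖((n : ℂ) + 1)‖ = (n : ℝ) + 1 := by
  have h : ((n : ℂ) + 1) = ((n + 1 : ℕ) : ℂ) := by push_cast; ring
  rw [h, Complex.norm_natCast]; push_cast; ring

lemma complex_norm_natCast_add_two (n : ℕ) : ‖((n : ℂ) + 2)‖ = (n : ℝ) + 2 := by
  have h : ((n : ℂ) + 2) = ((n + 2 : ℕ) : ℂ) := by push_cast; ring
  rw [h, Complex.norm_natCast]; push_cast; ring

lemma frobCoeff_bound (c : ℕ → ℂ) (C s : ℝ) (hC : 0 < C) (hs : 0 < s) (hs1 : s ≤ 1)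
    (hc : ∀ n, ‖c n‖ * s ^ n ≤ C) :
    ∀ n, ‖frobCoeff c n‖ ≤ ((C + 1) / s) ^ n := by
  intro n
  induction n using Nat.strong_induction_on with
  | _ n ih =>
    match n with
    | 0 => simp [frobCoeff]
    | n + 1 =>
      rw [frobCoeff, norm_div]
      have hden : ‖((n : ℂ) + 1) * ((n : ℂ) + 3)‖ = ((n : ℝ) + 1) * ((n : ℝ) + 3) := by
        rw [norm_mul]
        have e1 : ((n : ℂ) + 1) = ((n + 1 : ℕ) : ℂ) := by push_cast; ring
        have e3 : ((n : ℂ) + 3) = ((n + 3 : ℕ) : ℂ) := by push_cast; ring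
        rw [e1, e3, Complex.norm_natCast, Complex.norm_natCast]
        push_cast; ring
      have hsumb : ‖∑ j ∈ Finset.range (n + 1), c j * frobCoeff c (n - j)‖
          ≤ (n + 1 : ℝ) * (C * (C + 1) ^ n / s ^ n) := by
        calc ‖∑ j ∈ Finset.range (n + 1), c j * frobCoeff c (n - j)‖
            ≤ ∑ j ∈ Finset.range (n + 1), ‖c j * frobCoeff c (n - j)‖ :=
              norm_sum_le _ _
          _ ≤ ∑ j ∈ Finset.range (n + 1), C * (C + 1) ^ n / s ^ n := by
              apply Finset.sum_le_sum
              intro j hj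
              rw [Finset.mem_range, Nat.lt_succ_iff] at hj
              rw [norm_mul]
              have hcj : ‖c j‖ ≤ C / s ^ j := by
                rw [le_div_iff₀ (pow_pos hs j)]; exact hc j
              have haj : ‖frobCoeff c (n - j)‖ ≤ ((C + 1) / s) ^ (n - j) :=
                ih (n - j) (Nat.lt_succ_of_le (Nat.sub_le n j))
              have h1 : ‖c j‖ * ‖frobCoeff c (n - j)‖
                  ≤ (C / s ^ j) * ((C + 1) / s) ^ (n - j) := by
                apply mul_le_mul hcj haj (norm_nonneg _)
                positivity
              refine h1.trans ?_
              rw [div_pow]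
              have hsplit : (C / s ^ j) * ((C + 1) ^ (n - j) / s ^ (n - j))
                  = C * (C + 1) ^ (n - j) / s ^ n := by
                rw [div_mul_div_comm, ← pow_add, Nat.add_sub_cancel' hj]
              rw [hsplit]
              gcongr
              · linarith
              · exact Nat.sub_le n j
          _ = (n + 1 : ℝ) * (C * (C + 1) ^ n / s ^ n) := by
              rw [Finset.sum_const, Finset.card_range]
              push_cast; ring
      rw [hden, div_le_iff₀ (by positivity)]
      refine hsumb.trans ?_
      set P : ℝ := (C + 1) ^ n / s ^ n with hPdef
      have hP : 0 ≤ P := by positivity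
      have hQ : C * P ≤ ((C + 1) / s) * P := by
        apply mul_le_mul_of_nonneg_right ?_ hP
        rw [le_div_iff₀ hs]; nlinarith
      have hpow : ((C + 1) / s) ^ (n + 1) = ((C + 1) / s) * P := by
        rw [pow_succ, div_pow]; ring
      rw [hpow]
      have hstep : (n + 1 : ℝ) * (C * P) ≤ (n + 1 : ℝ) * (((C + 1) / s) * P) :=
        mul_le_mul_of_nonneg_left hQ (by positivity)
      have hCP : C * (C + 1) ^ n / s ^ n = C * P := by rw [hPdef]; ring
      rw [hCP]
      refine hstep.trans ?_
      have hQ0 : 0 ≤ ((C + 1) / s) * P := by positivity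
      have hn1 : (0:ℝ) ≤ (n:ℝ) + 1 := by positivity
      have hn2 : (0:ℝ) ≤ (n:ℝ) + 2 := by positivity
      nlinarith [mul_nonneg (mul_nonneg hQ0 hn1) hn2]


/-- Existence of the Frobenius solution with the larger exponent `3/2` for
`f″ = (3/(4z²) + A/z + B + z·w(z))·f` near `z = 0`: substituting
`f = z^{3/2}·k(z)`, there always exists a holomorphic `k` with `k(0) = 1`
solving `z·k″ + 3·k′ = (A + Bz + z²w)·k`, for arbitrary `A` and `B`. -/
theorem frobenius_solution_larger_exponent
    (ρ : ℝ) (hρ : 0 < ρ) (A B : ℂ) (w : ℂ → ℂ)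
    (hw : DifferentiableOn ℂ w (ball (0 : ℂ) ρ)) :
    ∃ ρ' : ℝ, 0 < ρ' ∧ ρ' ≤ ρ ∧
      ∃ k : ℂ → ℂ, DifferentiableOn ℂ k (ball (0 : ℂ) ρ') ∧ k 0 = 1 ∧
        ∀ z ∈ ball (0 : ℂ) ρ',
          z * deriv (deriv k) z + 3 * deriv k z = (A + B * z + z ^ 2 * w z) * k z := by
  classical
  set q : ℂ → ℂ := fun z => A + B * z + z ^ 2 * w z with hqdef
  have hqd : DifferentiableOn ℂ q (ball (0 : ℂ) ρ) := by
    apply DifferentiableOn.add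
    apply DifferentiableOn.add
    · exact differentiableOn_const A
    · exact (differentiable_id.const_mul B).differentiableOn
    · exact ((differentiable_pow 2).differentiableOn).mul hw
  have hqa : AnalyticAt ℂ q 0 := hqd.analyticAt (isOpen_ball.mem_nhds (mem_ball_self hρ))
  obtain ⟨p, hpa⟩ := hqa
  obtain ⟨R, hp⟩ := hpa
  obtain ⟨s'', hs''0, hs''R⟩ := ENNReal.lt_iff_exists_nnreal_btwn.mp hp.r_pos
  obtain ⟨C, hC0, hCb⟩ := p.norm_mul_pow_le_of_lt_radius (lt_of_lt_of_le hs''R hp.r_le)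
  set c : ℕ → ℂ := fun n => p.coeff n with hcdef
  have hcnorm : ∀ n, ‖c n‖ ≤ ‖p n‖ := by
    intro n
    have h := (p n).le_opNorm (fun _ => (1 : ℂ))
    simp only [norm_one, Finset.prod_const, one_pow, mul_one] at h
    exact h
  have hs''0' : (0 : ℝ) < (s'' : ℝ) := by exact_mod_cast hs''0
  set s : ℝ := min (s'' : ℝ) (min ρ 1) with hsdef
  have hs0 : 0 < s := lt_min hs''0' (lt_min hρ one_pos)
  have hsρ : s ≤ ρ := le_trans (min_le_right _ _) (min_le_left _ _)
  have hs1 : s ≤ 1 := le_trans (min_le_right _ _) (min_le_right _ _)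
  have hss'' : s ≤ (s'' : ℝ) := min_le_left _ _
  have hc : ∀ n, ‖c n‖ * s ^ n ≤ C := by
    intro n
    calc ‖c n‖ * s ^ n ≤ ‖p n‖ * (s'' : ℝ) ^ n := by
          apply mul_le_mul (hcnorm n) (pow_le_pow_left₀ hs0.le hss'' n)
            (by positivity) (norm_nonneg _)
      _ ≤ C := hCb n
  have hqsum : ∀ z : ℂ, ‖z‖ < s → HasSum (fun n => c n * z ^ n) (q z) := by
    intro z hz
    have hmem : z ∈ EMetric.ball (0 : ℂ) R := by
      show edist z 0 < R
      rw [edist_nndist, nndist_zero_right]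
      refine lt_trans ?_ hs''R
      rw [ENNReal.coe_lt_coe, ← NNReal.coe_lt_coe, coe_nnnorm]
      exact lt_of_lt_of_le hz hss''
    have h := hp.hasSum hmem
    rw [zero_add] at h
    have heq : (fun n => (p n) fun _ => z) = fun n => c n * z ^ n := by
      funext n
      rw [p.apply_eq_pow_smul_coeff, smul_eq_mul]
      exact mul_comm _ _
    rwa [heq] at h
  -- constants
  set β : ℝ := (C + 1) / s with hβdef
  have hβ0 : 0 < β := by positivity
  set ρ' : ℝ := s / (2 * (C + 1)) with hρ'def
  have hρ'0 : 0 < ρ' := by positivity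
  have hβρ' : β * ρ' = 1 / 2 := by
    rw [hβdef, hρ'def]
    field_simp
  have hρ's : ρ' ≤ s / 2 := by
    rw [hρ'def]
    apply div_le_div_of_nonneg_left hs0.le (by norm_num)
    linarith
  have hρ'ρ : ρ' ≤ ρ := by linarith
  have hρ'lts : ρ' < s := by linarith
  set a : ℕ → ℂ := frobCoeff c with hadef
  have ha : ∀ n, ‖a n‖ ≤ β ^ n := fun n => frobCoeff_bound c C s hC0 hs0 hs1 hc n
  have habound : ∀ z : ℂ, ‖z‖ < ρ' → ∀ j n : ℕ, ‖a (n + j)‖ * ‖z‖ ^ n ≤ β ^ j * (1/2) ^ n := by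
    intro z hz j n
    calc ‖a (n + j)‖ * ‖z‖ ^ n ≤ β ^ (n + j) * ρ' ^ n := by
          apply mul_le_mul (ha _) (pow_le_pow_left₀ (norm_nonneg z) hz.le n)
            (by positivity) (by positivity)
      _ = β ^ j * (β * ρ') ^ n := by rw [mul_pow, pow_add]; ring
      _ = β ^ j * (1/2) ^ n := by rw [hβρ']
  have hcbound : ∀ z : ℂ, ‖z‖ < ρ' → ∀ n : ℕ, ‖c n * z ^ n‖ ≤ C * (1/2) ^ n := by
    intro z hz n
    rw [norm_mul, norm_pow]
    have h1 : ‖c n‖ ≤ C / s ^ n := by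
      rw [le_div_iff₀ (pow_pos hs0 n)]; exact hc n
    have h2 : ‖z‖ ^ n ≤ (s / 2) ^ n :=
      pow_le_pow_left₀ (norm_nonneg z) (le_trans hz.le hρ's) n
    calc ‖c n‖ * ‖z‖ ^ n ≤ (C / s ^ n) * (s / 2) ^ n := by
          apply mul_le_mul h1 h2 (by positivity) (by positivity)
      _ = C * (1/2) ^ n := by
          rw [div_pow]
          field_simp
          rw [← mul_pow]; norm_num
  -- the solution and its formal derivatives
  set k : ℂ → ℂ := fun z => ∑' n, a n * z ^ n with hkdef
  set k1 : ℂ → ℂ := fun z => ∑' n : ℕ, ((n : ℂ) + 1) * a (n + 1) * z ^ n with hk1def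
  set k2 : ℂ → ℂ := fun z => ∑' n : ℕ, ((n : ℂ) + 2) * ((n : ℂ) + 1) * a (n + 2) * z ^ n
    with hk2def
  set t : Set ℂ := ball (0 : ℂ) ρ' with htdef
  have hzt : ∀ z ∈ t, ‖z‖ < ρ' := by
    intro z hz
    rwa [htdef, mem_ball, dist_zero_right] at hz
  -- pointwise bounds for the derivative series
  have hb1 : ∀ y : ℂ, ‖y‖ < ρ' → ∀ n : ℕ,
      ‖a n * ((n : ℂ) * y ^ (n - 1))‖ ≤ (0 * (n : ℝ) ^ 2 + (2 * β) * (n : ℝ) + 0) * (1/2) ^ n := by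
    intro y hy n
    cases n with
    | zero => simp
    | succ m =>
      rw [norm_mul, norm_mul, Complex.norm_natCast, Nat.add_sub_cancel, norm_pow]
      have h1 : ‖a (m + 1)‖ * ‖y‖ ^ m ≤ β * (1/2) ^ m := by
        simpa using habound y hy 1 m
      calc ‖a (m + 1)‖ * (((m + 1 : ℕ) : ℝ) * ‖y‖ ^ m)
          = ((m : ℝ) + 1) * (‖a (m + 1)‖ * ‖y‖ ^ m) := by push_cast; ring
        _ ≤ ((m : ℝ) + 1) * (β * (1/2) ^ m) :=
            mul_le_mul_of_nonneg_left h1 (by positivity)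
        _ = (0 * ((m + 1 : ℕ) : ℝ) ^ 2 + (2 * β) * ((m + 1 : ℕ) : ℝ) + 0) * (1/2) ^ (m + 1) := by
            push_cast; rw [pow_succ]; ring
  have hb2 : ∀ y : ℂ, ‖y‖ < ρ' → ∀ n : ℕ,
      ‖((n : ℂ) + 1) * a (n + 1) * ((n : ℂ) * y ^ (n - 1))‖
        ≤ ((2 * β ^ 2) * (n : ℝ) ^ 2 + (2 * β ^ 2) * (n : ℝ) + 0) * (1/2) ^ n := by
    intro y hy n
    cases n with
    | zero => simp
    | succ m =>
      rw [norm_mul, norm_mul, norm_mul, Complex.norm_natCast, Nat.add_sub_cancel, norm_pow,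
        complex_norm_natCast_add_one (m + 1)]
      have h1 : ‖a (m + 2)‖ * ‖y‖ ^ m ≤ β ^ 2 * (1/2) ^ m := by
        simpa using habound y hy 2 m
      calc (((m + 1 : ℕ) : ℝ) + 1) * ‖a (m + 1 + 1)‖ * (((m + 1 : ℕ) : ℝ) * ‖y‖ ^ m)
          = ((m : ℝ) + 2) * ((m : ℝ) + 1) * (‖a (m + 2)‖ * ‖y‖ ^ m) := by
            push_cast; ring_nf
        _ ≤ ((m : ℝ) + 2) * ((m : ℝ) + 1) * (β ^ 2 * (1/2) ^ m) :=
            mul_le_mul_of_nonneg_left h1 (by positivity)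
        _ ≤ ((2 * β ^ 2) * ((m + 1 : ℕ) : ℝ) ^ 2 + (2 * β ^ 2) * ((m + 1 : ℕ) : ℝ) + 0)
              * (1/2) ^ (m + 1) := le_of_eq (by push_cast; rw [pow_succ]; ring)
  have hopen : IsOpen t := isOpen_ball
  have hconn : IsPreconnected t := (convex_ball (0 : ℂ) ρ').isPreconnected
  have h0t : (0 : ℂ) ∈ t := mem_ball_self hρ'0
  have hsum0 : Summable (fun n => a n * (0 : ℂ) ^ n) := by
    apply summable_of_ne_finset_zero (s := {0})
    intro b hb
    rw [Finset.mem_singleton] at hb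
    simp [zero_pow hb]
  have hsum0' : Summable (fun n : ℕ => ((n : ℂ) + 1) * a (n + 1) * (0 : ℂ) ^ n) := by
    apply summable_of_ne_finset_zero (s := {0})
    intro b hb
    rw [Finset.mem_singleton] at hb
    simp [zero_pow hb]
  have hder1 : ∀ z ∈ t, HasDerivAt k (∑' n, a n * ((n : ℂ) * z ^ (n - 1))) z := by
    intro z hz
    exact hasDerivAt_tsum_of_isPreconnected (summable_quadratic_geom 0 (2 * β) 0)
      hopen hconn (fun n y _ => (hasDerivAt_pow n y).const_mul (a n))
      (fun n y hy => hb1 y (hzt y hy) n) h0t hsum0 hz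
  have hder2 : ∀ z ∈ t,
      HasDerivAt k1 (∑' n : ℕ, ((n : ℂ) + 1) * a (n + 1) * ((n : ℂ) * z ^ (n - 1))) z := by
    intro z hz
    exact hasDerivAt_tsum_of_isPreconnected (summable_quadratic_geom (2 * β ^ 2) (2 * β ^ 2) 0)
      hopen hconn (fun n y _ => (hasDerivAt_pow n y).const_mul (((n : ℂ) + 1) * a (n + 1)))
      (fun n y hy => hb2 y (hzt y hy) n) h0t hsum0' hz
  have hshift1 : ∀ z : ℂ, ‖z‖ < ρ' → (∑' n, a n * ((n : ℂ) * z ^ (n - 1))) = k1 z := by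
    intro z hz
    have hs' : Summable (fun n => a n * ((n : ℂ) * z ^ (n - 1))) :=
      Summable.of_norm_bounded (summable_quadratic_geom 0 (2 * β) 0) (hb1 z hz)
    rw [Summable.tsum_eq_zero_add hs']
    simp only [Nat.cast_zero, zero_mul, mul_zero, zero_add]
    exact tsum_congr fun n => by
      rw [Nat.add_sub_cancel]
      push_cast
      ring
  have hshift2 : ∀ z : ℂ, ‖z‖ < ρ' →
      (∑' n : ℕ, ((n : ℂ) + 1) * a (n + 1) * ((n : ℂ) * z ^ (n - 1))) = k2 z := by
    intro z hz
    have hs' : Summable (fun n : ℕ => ((n : ℂ) + 1) * a (n + 1) * ((n : ℂ) * z ^ (n - 1))) :=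
      Summable.of_norm_bounded (summable_quadratic_geom (2 * β ^ 2) (2 * β ^ 2) 0) (hb2 z hz)
    rw [Summable.tsum_eq_zero_add hs']
    simp only [Nat.cast_zero, zero_mul, mul_zero, zero_add]
    exact tsum_congr fun n => by
      rw [Nat.add_sub_cancel, show n + 1 + 1 = n + 2 from rfl]
      push_cast
      ring
  have hk1d : ∀ z ∈ t, HasDerivAt k (k1 z) z := fun z hz =>
    (hshift1 z (hzt z hz)) ▸ hder1 z hz
  have hk2d : ∀ z ∈ t, HasDerivAt k1 (k2 z) z := fun z hz =>
    (hshift2 z (hzt z hz)) ▸ hder2 z hz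
  have hd1 : ∀ z ∈ t, deriv k z = k1 z := fun z hz => (hk1d z hz).deriv
  have hd2 : ∀ z ∈ t, deriv (deriv k) z = k2 z := by
    intro z hz
    have heq : deriv k =ᶠ[nhds z] k1 :=
      Filter.eventuallyEq_of_mem (hopen.mem_nhds hz) hd1
    rw [heq.deriv_eq]
    exact (hk2d z hz).deriv
  refine ⟨ρ', hρ'0, hρ'ρ, k, ?_, ?_, ?_⟩
  · exact fun z hz => ((hk1d z hz).differentiableAt).differentiableWithinAt
  · show (∑' n, a n * (0 : ℂ) ^ n) = 1
    rw [tsum_eq_single 0 (fun b hb => by simp [zero_pow hb])]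
    simp [hadef, frobCoeff_zero]
  · intro z hz
    have hz' : ‖z‖ < ρ' := hzt z hz
    have hSa : Summable (fun n => ‖a n * z ^ n‖) := by
      apply Summable.of_nonneg_of_le (fun n => norm_nonneg _) ?_
        (summable_quadratic_geom 0 0 1)
      intro n
      rw [norm_mul, norm_pow]
      calc ‖a n‖ * ‖z‖ ^ n ≤ β ^ 0 * (1/2) ^ n := by simpa using habound z hz' 0 n
        _ = (0 * (n : ℝ) ^ 2 + 0 * (n : ℝ) + 1) * (1/2) ^ n := by ring
    have hSc : Summable (fun n => ‖c n * z ^ n‖) := by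
      apply Summable.of_nonneg_of_le (fun n => norm_nonneg _) ?_
        (summable_quadratic_geom 0 0 C)
      intro n
      calc ‖c n * z ^ n‖ ≤ C * (1/2) ^ n := hcbound z hz' n
        _ = (0 * (n : ℝ) ^ 2 + 0 * (n : ℝ) + C) * (1/2) ^ n := by ring
    have hS1 : Summable (fun n : ℕ => ‖((n : ℂ) + 1) * a (n + 1) * z ^ n‖) := by
      apply Summable.of_nonneg_of_le (fun n => norm_nonneg _) ?_
        (summable_quadratic_geom 0 β β)
      intro n
      rw [norm_mul, norm_mul, complex_norm_natCast_add_one, norm_pow]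
      have h1 := habound z hz' 1 n
      calc ((n : ℝ) + 1) * ‖a (n + 1)‖ * ‖z‖ ^ n
          = ((n : ℝ) + 1) * (‖a (n + 1)‖ * ‖z‖ ^ n) := by ring
        _ ≤ ((n : ℝ) + 1) * (β ^ 1 * (1/2) ^ n) :=
            mul_le_mul_of_nonneg_left h1 (by positivity)
        _ = (0 * (n : ℝ) ^ 2 + β * (n : ℝ) + β) * (1/2) ^ n := by ring
    have hS10 : Summable (fun n : ℕ => ‖((n : ℂ) + 1) * (n : ℂ) * a (n + 1) * z ^ n‖) := by
      apply Summable.of_nonneg_of_le (fun n => norm_nonneg _) ?_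
        (summable_quadratic_geom β β 0)
      intro n
      rw [norm_mul, norm_mul, norm_mul, complex_norm_natCast_add_one, Complex.norm_natCast,
        norm_pow]
      have h1 := habound z hz' 1 n
      calc ((n : ℝ) + 1) * (n : ℝ) * ‖a (n + 1)‖ * ‖z‖ ^ n
          = ((n : ℝ) + 1) * (n : ℝ) * (‖a (n + 1)‖ * ‖z‖ ^ n) := by ring
        _ ≤ ((n : ℝ) + 1) * (n : ℝ) * (β ^ 1 * (1/2) ^ n) :=
            mul_le_mul_of_nonneg_left h1 (by positivity)
        _ = (β * (n : ℝ) ^ 2 + β * (n : ℝ) + 0) * (1/2) ^ n := by ring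
    have hq' : q z = ∑' n, c n * z ^ n := (hqsum z (lt_trans hz' hρ'lts)).tsum_eq.symm
    have hzad : (A + B * z + z ^ 2 * w z) = q z := by rw [hqdef]
    have e10 : (∑' n : ℕ, ((n : ℂ) + 1) * (n : ℂ) * a (n + 1) * z ^ n) = z * k2 z := by
      rw [Summable.tsum_eq_zero_add hS10.of_norm]
      simp only [Nat.cast_zero, zero_mul, mul_zero, zero_add, add_zero]
      have hterm : ∀ n : ℕ, ((((n + 1 : ℕ)) : ℂ) + 1) * (((n + 1 : ℕ) : ℂ)) * a (n + 1 + 1)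
          * z ^ (n + 1) = z * (((n : ℂ) + 2) * ((n : ℂ) + 1) * a (n + 2) * z ^ n) := by
        intro n
        rw [show n + 1 + 1 = n + 2 from rfl]
        push_cast
        ring
      rw [tsum_congr hterm, tsum_mul_left]
    have e1 : (3 : ℂ) * k1 z = ∑' n : ℕ, 3 * (((n : ℂ) + 1) * a (n + 1) * z ^ n) :=
      tsum_mul_left.symm
    calc z * deriv (deriv k) z + 3 * deriv k z
        = z * k2 z + 3 * k1 z := by rw [hd2 z hz, hd1 z hz]
      _ = (∑' n : ℕ, ((n : ℂ) + 1) * (n : ℂ) * a (n + 1) * z ^ n)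
            + (∑' n : ℕ, 3 * (((n : ℂ) + 1) * a (n + 1) * z ^ n)) := by
          rw [← e10, ← e1]
      _ = ∑' n : ℕ, (((n : ℂ) + 1) * (n : ℂ) * a (n + 1) * z ^ n
            + 3 * (((n : ℂ) + 1) * a (n + 1) * z ^ n)) :=
          (Summable.tsum_add hS10.of_norm ((hS1.of_norm).mul_left 3)).symm
      _ = ∑' n : ℕ, ∑ j ∈ Finset.range (n + 1), (c j * z ^ j) * (a (n - j) * z ^ (n - j)) := by
          refine tsum_congr fun n => ?_
          have hrec : ((n : ℂ) + 1) * ((n : ℂ) + 3) * a (n + 1)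
              = ∑ j ∈ Finset.range (n + 1), c j * a (n - j) := by
            rw [hadef]; exact frobCoeff_rec c n
          have hsum : ∑ j ∈ Finset.range (n + 1), (c j * z ^ j) * (a (n - j) * z ^ (n - j))
              = (∑ j ∈ Finset.range (n + 1), c j * a (n - j)) * z ^ n := by
            rw [Finset.sum_mul]
            refine Finset.sum_congr rfl fun j hj => ?_
            rw [Finset.mem_range, Nat.lt_succ_iff] at hj
            have hzpow : z ^ j * z ^ (n - j) = z ^ n := by
              rw [← pow_add, Nat.add_sub_cancel' hj]
            calc (c j * z ^ j) * (a (n - j) * z ^ (n - j))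
                = c j * a (n - j) * (z ^ j * z ^ (n - j)) := by ring
              _ = c j * a (n - j) * z ^ n := by rw [hzpow]
          rw [hsum, ← hrec]
          ring
      _ = (∑' n, c n * z ^ n) * (∑' n, a n * z ^ n) :=
          (tsum_mul_tsum_eq_tsum_sum_range_of_summable_norm hSc hSa).symm
      _ = (A + B * z + z ^ 2 * w z) * k z := by rw [hzad, hq']
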